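/- Let (g,μ) be a Leibniz algebra over a field K with Rota-Baxter operator T, and let (μ_t,T_t) be a formal one-parameter deformation of (g,μ,T) given by bilinear maps μ_i and linear maps T_i (i ≥ 0) with μ_0 = μ, T_0 = T. Suppose μ_i = 0 and T_i = 0 for all 1 ≤ i < n (so (μ_n,T_n) is the n-infinitesimal of the deformation). Then (μ_n,T_n) is a 2-cocycle; explicitly, for all x,y,z ∈ g: (i) μ(x,μ_n(y,z)) + μ_n(x,μ(y,z)) = μ(μ_n(x,y),z) + μ_n(μ(x,y),z) + μ_n(y,μ(x,z)) + μ(y,μ_n(x,z)); and (ii) μ_n(Tx,Ty) − T(μ_n(Tx,y)) − T(μ_n(x,Ty)) + μ(T_nx,Ty) + μ(Tx,T_ny) − T_n(μ(Tx,y)) − T(μ(T_nx,y)) − T_n(μ(x,Ty)) − T(μ(x,T_ny)) = 0. -/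

import Mathlib

/-- A bilinear map between modules over a field `K`, expressed as a predicate
on a curried two-argument function. -/
def Bilin (K : Type*) [Field K] {A B C : Type*} [AddCommGroup A] [Module K A]
    [AddCommGroup B] [Module K B] [AddCommGroup C] [Module K C]
    (f : A → B → C) : Prop :=
  (∀ a a' b, f (a + a') b = f a b + f a' b) ∧
  (∀ (c : K) (a : A) (b : B), f (c • a) b = c • f a b) ∧
  (∀ a b b', f a (b + b') = f a b + f a b') ∧
  (∀ (c : K) (a : A) (b : B), f a (c • b) = c • f a b)

/-- The (left) Leibniz identity for a bracket. -/
def IsLeibnizBracket {g : Type*} [AddCommGroup g] (br : g → g → g) : Prop :=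
  ∀ x y z, br x (br y z) = br (br x y) z + br y (br x z)


lemma pair_collapse {M : Type*} [AddCommGroup M] {n : ℕ} (hn : 1 ≤ n)
    (f : ℕ × ℕ → M) (h : ∀ i, 1 ≤ i → i < n → f (i, n - i) = 0) :
    ∑ p ∈ Finset.HasAntidiagonal.antidiagonal n, f p = f (0, n) + f (n, 0) := by
  rw [Finset.Nat.sum_antidiagonal_eq_sum_range_succ_mk]
  obtain ⟨m, rfl⟩ : ∃ m, n = m + 1 := ⟨n - 1, by omega⟩
  rw [Finset.sum_range_succ, Finset.sum_range_succ']
  have hz : ∀ i ∈ Finset.range m, f (i + 1, m + 1 - (i + 1)) = 0 := by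
    intro i hi
    exact h (i + 1) (Nat.le_add_left 1 i) (by simp at hi; omega)
  rw [Finset.sum_eq_zero hz]
  simp [add_comm]

lemma triple_collapse {M : Type*} [AddCommGroup M] {n : ℕ} (hn : 1 ≤ n)
    (G : ℕ → ℕ → ℕ → M)
    (h : ∀ i j k, i + j + k = n →
      ((1 ≤ i ∧ i < n) ∨ (1 ≤ j ∧ j < n) ∨ (1 ≤ k ∧ k < n)) → G i j k = 0) :
    ∑ p ∈ Finset.HasAntidiagonal.antidiagonal n, ∑ q ∈ Finset.HasAntidiagonal.antidiagonal p.2, G p.1 q.1 q.2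
      = G 0 0 n + G 0 n 0 + G n 0 0 := by
  rw [pair_collapse hn _ (fun i h1 h2 => Finset.sum_eq_zero (fun q hq => by
    rw [Finset.HasAntidiagonal.mem_antidiagonal] at hq
    exact h i q.1 q.2 (by omega) (Or.inl ⟨h1, h2⟩)))]
  rw [show ((0, n) : ℕ × ℕ).2 = n from rfl, show ((n, 0) : ℕ × ℕ).2 = 0 from rfl]
  rw [pair_collapse hn _ (fun j h1 h2 => h 0 j (n - j) (by omega)
    (Or.inr (Or.inl ⟨h1, h2⟩)))]
  simp [add_assoc]
theorem n_infinitesimal_is_cocycle {K : Type*} [Field K]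
    {g : Type*} [AddCommGroup g] [Module K g]
    (μ : g → g → g) (hbil : Bilin K μ) (hleib : IsLeibnizBracket μ)
    (T : g → g) (hT : IsLinearMap K T)
    (hRB : ∀ x y, μ (T x) (T y) = T (μ (T x) y + μ x (T y)))
    (μi : ℕ → g → g → g) (Ti : ℕ → g → g)
    (hμbil : ∀ i, Bilin K (μi i)) (hTilin : ∀ i, IsLinearMap K (Ti i))
    (hμ0 : μi 0 = μ) (hT0 : Ti 0 = T)
    (hdef1 : ∀ (n : ℕ) (x y z : g),
      ∑ p ∈ Finset.HasAntidiagonal.antidiagonal n, μi p.1 x (μi p.2 y z)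
        = ∑ p ∈ Finset.HasAntidiagonal.antidiagonal n, μi p.1 (μi p.2 x y) z
          + ∑ p ∈ Finset.HasAntidiagonal.antidiagonal n, μi p.1 y (μi p.2 x z))
    (hdef2 : ∀ (n : ℕ) (x y : g),
      ∑ p ∈ Finset.HasAntidiagonal.antidiagonal n, ∑ q ∈ Finset.HasAntidiagonal.antidiagonal p.2,
          μi p.1 (Ti q.1 x) (Ti q.2 y)
        = ∑ p ∈ Finset.HasAntidiagonal.antidiagonal n, ∑ q ∈ Finset.HasAntidiagonal.antidiagonal p.2,
            Ti p.1 (μi q.1 (Ti q.2 x) y)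
          + ∑ p ∈ Finset.HasAntidiagonal.antidiagonal n, ∑ q ∈ Finset.HasAntidiagonal.antidiagonal p.2,
              Ti p.1 (μi q.1 x (Ti q.2 y)))
    (n : ℕ) (hn : 1 ≤ n)
    (hμvanish : ∀ i, 1 ≤ i → i < n → μi i = fun _ _ => 0)
    (hTvanish : ∀ i, 1 ≤ i → i < n → Ti i = fun _ => 0) :
    (∀ x y z : g,
      μ x (μi n y z) + μi n x (μ y z)
        = μ (μi n x y) z + μi n (μ x y) z + μi n y (μ x z) + μ y (μi n x z)) ∧
    (∀ x y : g,
      μi n (T x) (T y) - T (μi n (T x) y) - T (μi n x (T y))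
        + μ (Ti n x) (T y) + μ (T x) (Ti n y) - Ti n (μ (T x) y)
        - T (μ (Ti n x) y) - Ti n (μ x (T y)) - T (μ x (Ti n y)) = 0) := by
  have hμz : ∀ i, 1 ≤ i → i < n → ∀ a b : g, μi i a b = 0 := by
    intro i h1 h2 a b; rw [hμvanish i h1 h2]
  have hTz : ∀ i, 1 ≤ i → i < n → ∀ a : g, Ti i a = 0 := by
    intro i h1 h2 a; rw [hTvanish i h1 h2]
  have hzl : ∀ i (b : g), μi i 0 b = 0 := fun i b => by
    have := (hμbil i).2.1 0 0 b; simpa using this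
  have hzr : ∀ i (a : g), μi i a 0 = 0 := fun i a => by
    have := (hμbil i).2.2.2 0 a 0; simpa using this
  have hTz0 : ∀ i, Ti i 0 = 0 := fun i => (hTilin i).map_zero
  constructor
  · intro x y z
    have h := hdef1 n x y z
    rw [pair_collapse hn _ (fun i h1 h2 => by
          simp only [hμz i h1 h2, hzr]),
        pair_collapse hn _ (fun i h1 h2 => by
          simp only [hμz i h1 h2]),
        pair_collapse hn _ (fun i h1 h2 => by
          simp only [hμz i h1 h2, hzr])] at h
    simp only [hμ0, Nat.sub_zero, Nat.sub_self] at h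
    rw [h]; abel
  · intro x y
    have h := hdef2 n x y
    have e1 : ∑ p ∈ Finset.HasAntidiagonal.antidiagonal n, ∑ q ∈ Finset.HasAntidiagonal.antidiagonal p.2,
          μi p.1 (Ti q.1 x) (Ti q.2 y)
        = μi 0 (Ti 0 x) (Ti n y) + μi 0 (Ti n x) (Ti 0 y)
          + μi n (Ti 0 x) (Ti 0 y) :=
      triple_collapse hn (fun i j k => μi i (Ti j x) (Ti k y))
        (fun i j k hsum hc => by
          rcases hc with ⟨h1, h2⟩ | ⟨h1, h2⟩ | ⟨h1, h2⟩
          · simp [hμz i h1 h2]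
          · simp [hTz j h1 h2, hzl]
          · simp [hTz k h1 h2, hzr])
    have e2 : ∑ p ∈ Finset.HasAntidiagonal.antidiagonal n, ∑ q ∈ Finset.HasAntidiagonal.antidiagonal p.2,
          Ti p.1 (μi q.1 (Ti q.2 x) y)
        = Ti 0 (μi 0 (Ti n x) y) + Ti 0 (μi n (Ti 0 x) y)
          + Ti n (μi 0 (Ti 0 x) y) :=
      triple_collapse hn (fun i j k => Ti i (μi j (Ti k x) y))
        (fun i j k hsum hc => by
          rcases hc with ⟨h1, h2⟩ | ⟨h1, h2⟩ | ⟨h1, h2⟩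
          · simp [hTz i h1 h2]
          · simp [hμz j h1 h2, hTz0]
          · simp [hTz k h1 h2, hzl, hTz0])
    have e3 : ∑ p ∈ Finset.HasAntidiagonal.antidiagonal n, ∑ q ∈ Finset.HasAntidiagonal.antidiagonal p.2,
          Ti p.1 (μi q.1 x (Ti q.2 y))
        = Ti 0 (μi 0 x (Ti n y)) + Ti 0 (μi n x (Ti 0 y))
          + Ti n (μi 0 x (Ti 0 y)) :=
      triple_collapse hn (fun i j k => Ti i (μi j x (Ti k y)))
        (fun i j k hsum hc => by
          rcases hc with ⟨h1, h2⟩ | ⟨h1, h2⟩ | ⟨h1, h2⟩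
          · simp [hTz i h1 h2]
          · simp [hμz j h1 h2, hTz0]
          · simp [hTz k h1 h2, hzr, hTz0])
    rw [e1, e2, e3, hμ0, hT0] at h
    have h' := sub_eq_zero_of_eq h
    rw [← h']; abel
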